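/- arXiv:2006.01810 — 4 statements merged into one kernel-verified Lean document; each statement's English description precedes it below -/
import Mathlib

section
/- Let k be algebraically closed of characteristic zero and let A ∈ SL_4(k), B ∈ SL_4(k) each be diagonalizable with exactly two distinct eigenvalues, each of multiplicity 2. Then the pair (A, B) generates a reducible representation of the free group F₂ on k⁴, i.e., there is a proper nonzero subspace invariant under both A and B. -/
/-- A square matrix is diagonalizable if it is conjugate to a diagonal matrix. -/
def IsDiagonalizableMat {r : ℕ} {k : Type*} [Field k] (A : Matrix (Fin r) (Fin r) k) : Prop :=
  ∃ P : Matrix (Fin r) (Fin r) k, IsUnit P ∧ (P⁻¹ * A * P).IsDiag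

section Aux

variable {k V : Type*} [Field k] [IsAlgClosed k] [AddCommGroup V] [Module k V]
  [FiniteDimensional k V]

/-- Two eigenspaces for distinct eigenvalues span everything if dims add up. -/
lemma aux_sup_eq_top (f : Module.End k V) (μ ν : k) (hμν : μ ≠ ν)
    (h : Module.finrank k (f.eigenspace μ) + Module.finrank k (f.eigenspace ν)
      = Module.finrank k V) :
    f.eigenspace μ ⊔ f.eigenspace ν = ⊤ := by
  have hdisj : f.eigenspace μ ⊓ f.eigenspace ν = ⊥ := by
    rw [Submodule.eq_bot_iff]
    intro x hx
    obtain ⟨hx1, hx2⟩ := Submodule.mem_inf.mp hx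
    rw [Module.End.mem_eigenspace_iff] at hx1 hx2
    have : (μ - ν) • x = 0 := by rw [sub_smul, hx1.symm.trans hx2, sub_self]
    exact (smul_eq_zero.mp this).resolve_left (sub_ne_zero.mpr hμν) 
  have hr := Submodule.finrank_sup_add_finrank_inf_eq (f.eigenspace μ) (f.eigenspace ν)
  rw [hdisj, finrank_bot, add_zero, h] at hr
  exact Submodule.eq_top_of_finrank_eq hr

/-- The key abstract statement for endomorphisms. -/
lemma aux_key (a b : Module.End k V) (hV : Module.finrank k V = 4)
    (ε₁ ε₂ : k) (hε : ε₁ ≠ ε₂)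
    (hA1 : Module.finrank k (a.eigenspace ε₁) = 2)
    (hA2 : Module.finrank k (a.eigenspace ε₂) = 2)
    (ε₁' ε₂' : k) (hε' : ε₁' ≠ ε₂')
    (hB1 : Module.finrank k (b.eigenspace ε₁') = 2)
    (hB2 : Module.finrank k (b.eigenspace ε₂') = 2) :
    ∃ H : Submodule k V, H ≠ ⊥ ∧ H ≠ ⊤ ∧ ∀ v ∈ H, a v ∈ H ∧ b v ∈ H := by
  have hcA : ε₁ - ε₂ ≠ 0 := sub_ne_zero.mpr hε
  have hcB : ε₁' - ε₂' ≠ 0 := sub_ne_zero.mpr hε'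
  have hEtop : a.eigenspace ε₁ ⊔ a.eigenspace ε₂ = ⊤ :=
    aux_sup_eq_top a ε₁ ε₂ hε (by rw [hA1, hA2, hV])
  have hFtop : b.eigenspace ε₁' ⊔ b.eigenspace ε₂' = ⊤ :=
    aux_sup_eq_top b ε₁' ε₂' hε' (by rw [hB1, hB2, hV])
  set Q : Module.End k V := (ε₁ - ε₂)⁻¹ • (a - ε₂ • 1) with hQdef
  set P : Module.End k V := (ε₁' - ε₂')⁻¹ • (b - ε₂' • 1) with hPdef
  -- Q of anything lands in the ε₁-eigenspace of a
  have hQmem : ∀ w : V, Q w ∈ a.eigenspace ε₁ := by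
    intro w
    have hw : w ∈ a.eigenspace ε₁ ⊔ a.eigenspace ε₂ := hEtop ▸ Submodule.mem_top
    obtain ⟨y, hy, z, hz, rfl⟩ := Submodule.mem_sup.mp hw
    have hay : a y = ε₁ • y := Module.End.mem_eigenspace_iff.mp hy
    have haz : a z = ε₂ • z := Module.End.mem_eigenspace_iff.mp hz
    have : Q (y + z) = y := by
      simp only [hQdef, LinearMap.smul_apply, LinearMap.sub_apply, LinearMap.smul_apply,
        Module.End.one_apply, map_add, hay, haz]
      rw [← sub_smul, ← sub_smul, sub_self, zero_smul, smul_zero, add_zero, smul_smul,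
        inv_mul_cancel₀ hcA, one_smul]
    rw [this]; exact hy
  have hPmem : ∀ w : V, P w ∈ b.eigenspace ε₁' := by
    intro w
    have hw : w ∈ b.eigenspace ε₁' ⊔ b.eigenspace ε₂' := hFtop ▸ Submodule.mem_top
    obtain ⟨y, hy, z, hz, rfl⟩ := Submodule.mem_sup.mp hw
    have hay : b y = ε₁' • y := Module.End.mem_eigenspace_iff.mp hy
    have haz : b z = ε₂' • z := Module.End.mem_eigenspace_iff.mp hz
    have : P (y + z) = y := by
      simp only [hPdef, LinearMap.smul_apply, LinearMap.sub_apply, LinearMap.smul_apply,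
        Module.End.one_apply, map_add, hay, haz]
      rw [← sub_smul, ← sub_smul, sub_self, zero_smul, smul_zero, add_zero, smul_smul,
        inv_mul_cancel₀ hcB, one_smul]
    rw [this]; exact hy
  have hQfix : ∀ w ∈ a.eigenspace ε₁, Q w = w := by
    intro w hw
    have haw : a w = ε₁ • w := Module.End.mem_eigenspace_iff.mp hw
    simp only [hQdef, LinearMap.smul_apply, LinearMap.sub_apply, LinearMap.smul_apply,
      Module.End.one_apply, haw]
    rw [← sub_smul, smul_smul, inv_mul_cancel₀ hcA, one_smul]
  have hPfix : ∀ w ∈ b.eigenspace ε₁', P w = w := by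
    intro w hw
    have hbw : b w = ε₁' • w := Module.End.mem_eigenspace_iff.mp hw
    simp only [hPdef, LinearMap.smul_apply, LinearMap.sub_apply, LinearMap.smul_apply,
      Module.End.one_apply, hbw]
    rw [← sub_smul, smul_smul, inv_mul_cancel₀ hcB, one_smul]
  -- the restriction of P ∘ Q to the ε₁'-eigenspace of b
  set F₁ := b.eigenspace ε₁' with hF₁
  have hrestr : ∀ x ∈ F₁, (P ∘ₗ Q) x ∈ F₁ := fun x _ => hPmem (Q x)
  set S : Module.End k F₁ := (P ∘ₗ Q).restrict hrestr with hSdef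
  have : Nontrivial F₁ := by
    have : 0 < Module.finrank k F₁ := by rw [hB1]; norm_num
    exact Module.nontrivial_of_finrank_pos this
  obtain ⟨μ, hμ⟩ := Module.End.exists_eigenvalue S
  obtain ⟨x, hx⟩ := hμ.exists_hasEigenvector
  set x₀ : V := (x : V) with hx₀def
  have hx₀F : x₀ ∈ F₁ := x.2
  have hx₀ne : x₀ ≠ 0 := fun h => hx.right (Subtype.ext h)
  have hPQ : P (Q x₀) = μ • x₀ := by
    have := congrArg Subtype.val hx.apply_eq_smul
    simpa [hSdef, LinearMap.restrict_apply] using this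
  -- the invariant subspace
  set H : Submodule k V := Submodule.span k {x₀, Q x₀} with hHdef
  have hx₀H : x₀ ∈ H := Submodule.subset_span (Set.mem_insert _ _)
  have hQx₀H : Q x₀ ∈ H := Submodule.subset_span (Set.mem_insert_iff.mpr (Or.inr rfl))
  have hQinv : ∀ v ∈ H, Q v ∈ H := by
    intro v hv
    have : H ≤ H.comap Q := by
      rw [hHdef, Submodule.span_le]
      rintro y (rfl | rfl)
      · exact hQx₀H
      · simpa [Submodule.mem_comap, hQfix _ (hQmem x₀)] using hQx₀H
    exact this hv
  have hPinv : ∀ v ∈ H, P v ∈ H := by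
    intro v hv
    have : H ≤ H.comap P := by
      rw [hHdef, Submodule.span_le]
      rintro y (rfl | rfl)
      · simpa [Submodule.mem_comap, hPfix _ hx₀F] using hx₀H
      · simpa [Submodule.mem_comap, hPQ] using H.smul_mem μ hx₀H
    exact this hv
  refine ⟨H, ?_, ?_, ?_⟩
  · intro h
    rw [h, Submodule.mem_bot] at hx₀H
    exact hx₀ne hx₀H
  · intro h
    have h1 : Module.finrank k H ≤ 2 := by
      classical
      refine (finrank_span_le_card ({x₀, Q x₀} : Set V)).trans ?_
      rw [Set.toFinset_insert, Set.toFinset_singleton]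
      exact (Finset.card_insert_le _ _).trans (by simp)
    rw [h, finrank_top, hV] at h1
    norm_num at h1
  · intro v hv
    constructor
    · have : a v = ε₂ • v + (ε₁ - ε₂) • Q v := by
        simp only [hQdef, LinearMap.smul_apply, LinearMap.sub_apply, LinearMap.smul_apply,
          Module.End.one_apply]
        match_scalars <;> (field_simp; try ring)
      rw [this]
      exact H.add_mem (H.smul_mem _ hv) (H.smul_mem _ (hQinv v hv))
    · have : b v = ε₂' • v + (ε₁' - ε₂') • P v := by
        simp only [hPdef, LinearMap.smul_apply, LinearMap.sub_apply, LinearMap.smul_apply,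
          Module.End.one_apply]
        match_scalars <;> (field_simp; try ring)
      rw [this]
      exact H.add_mem (H.smul_mem _ hv) (H.smul_mem _ (hPinv v hv))

end Aux

/-- Proposition 8.1: if `A, B ∈ SL_4(k)` are diagonalizable, each with exactly two
distinct eigenvalues of multiplicity `2`, then the pair `(A, B)` generates a
reducible representation of the free group `F₂` on `k⁴`: there is a proper nonzero
subspace invariant under both `A` and `B`. -/
theorem sl4_two_double_eigenvalues_reducible {k : Type*} [Field k] [IsAlgClosed k] [CharZero k]
    (A B : Matrix (Fin 4) (Fin 4) k) (hA : A.det = 1) (hB : B.det = 1)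
    (hAd : IsDiagonalizableMat A) (hBd : IsDiagonalizableMat B)
    (ε₁ ε₂ : k) (hε : ε₁ ≠ ε₂)
    (hA1 : Module.finrank k (Module.End.eigenspace A.mulVecLin ε₁) = 2)
    (hA2 : Module.finrank k (Module.End.eigenspace A.mulVecLin ε₂) = 2)
    (ε₁' ε₂' : k) (hε' : ε₁' ≠ ε₂')
    (hB1 : Module.finrank k (Module.End.eigenspace B.mulVecLin ε₁') = 2)
    (hB2 : Module.finrank k (Module.End.eigenspace B.mulVecLin ε₂') = 2) :
    ∃ H : Submodule k (Fin 4 → k), H ≠ ⊥ ∧ H ≠ ⊤ ∧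
      ∀ v ∈ H, A.mulVec v ∈ H ∧ B.mulVec v ∈ H := by
  have hV : Module.finrank k (Fin 4 → k) = 4 := by simp
  obtain ⟨H, h1, h2, h3⟩ := aux_key A.mulVecLin B.mulVecLin hV ε₁ ε₂ hε hA1 hA2
    ε₁' ε₂' hε' hB1 hB2
  exact ⟨H, h1, h2, fun v hv => by simpa [Matrix.mulVecLin_apply] using h3 v hv⟩
end

section
/- If gcd(n, r) = 1, then for any k ∈ ℤ_r and l ∈ ℤ_n, the cardinality of Ñ_{n,r}(k,l) = {(x₁,...,x_r) ∈ (ℤ_{nr})^r : n·x_i ≡ k (mod r) for all i, x₁+...+x_r ≡ l (mod n)} equals n^{r-1}; in particular it is independent of k and l. -/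
lemma sum_fiber_card {n m : ℕ} (hn : 0 < n) (l : ZMod n) :
    Nat.card {z : Fin (m + 1) → ZMod n // ∑ i, z i = l} = n ^ m := by
  haveI : NeZero n := ⟨hn.ne'⟩
  have e : {z : Fin (m + 1) → ZMod n // ∑ i, z i = l} ≃ (Fin m → ZMod n) :=
    { toFun := fun z => Fin.init z.1
      invFun := fun w => ⟨Fin.snoc w (l - ∑ i, w i), by
        simp [Fin.sum_univ_castSucc]⟩
      left_inv := fun z => by
        have hz : ∑ i, Fin.init z.1 i + z.1 (Fin.last m) = l := by
          have := z.2
          rw [Fin.sum_univ_castSucc] at this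
          exact this
        have hlast : z.1 (Fin.last m) = l - ∑ i, Fin.init z.1 i :=
          eq_sub_of_add_eq' hz
        apply Subtype.ext
        show Fin.snoc (Fin.init z.1) (l - ∑ i, Fin.init z.1 i) = z.1
        rw [← hlast]
        exact Fin.snoc_init_self z.1
      right_inv := fun w => Fin.init_snoc _ _ }
  rw [Nat.card_congr e]
  simp [Nat.card_eq_fintype_card, ZMod.card]

/-- Corollary 6.8: if `gcd(n,r) = 1`, then for any `k ∈ ℤ_r` and `l ∈ ℤ_n` the
cardinality of `Ñ_{n,r}(k,l) = {(x₁,...,x_r) ∈ (ℤ_{nr})^r : n·x_i ≡ k (mod r),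
Σ x_i ≡ l (mod n)}` equals `n^{r-1}`; in particular it is independent of `k`, `l`. -/
theorem tildeN_card {n r : ℕ} (hn : 0 < n) (hr : 0 < r) (h : Nat.Coprime n r)
    (k : ZMod r) (l : ZMod n) :
    Nat.card
      {x : Fin r → ZMod (n * r) //
        (∀ i, ZMod.castHom (dvd_mul_left r n) (ZMod r) ((n : ZMod (n * r)) * x i) = k) ∧
        ZMod.castHom (dvd_mul_right n r) (ZMod n) (∑ i, x i) = l} = n ^ (r - 1) := by
  obtain ⟨m, rfl⟩ : ∃ m, r = m + 1 := ⟨r - 1, (Nat.succ_pred_eq_of_pos hr).symm⟩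
  let e : ZMod (n * (m + 1)) ≃+* ZMod n × ZMod (m + 1) := ZMod.chineseRemainder h
  have hsnd : (RingHom.snd (ZMod n) (ZMod (m + 1))).comp
      (e : ZMod (n * (m + 1)) →+* ZMod n × ZMod (m + 1))
      = ZMod.castHom (dvd_mul_left (m + 1) n) (ZMod (m + 1)) := RingHom.ext_zmod _ _
  have hfst : (RingHom.fst (ZMod n) (ZMod (m + 1))).comp
      (e : ZMod (n * (m + 1)) →+* ZMod n × ZMod (m + 1))
      = ZMod.castHom (dvd_mul_right n (m + 1)) (ZMod n) := RingHom.ext_zmod _ _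
  have hsnd' : ∀ y : ZMod (n * (m + 1)),
      ZMod.castHom (dvd_mul_left (m + 1) n) (ZMod (m + 1)) y = (e y).2 := fun y =>
    (RingHom.congr_fun hsnd y).symm
  have hfst' : ∀ y : ZMod (n * (m + 1)),
      ZMod.castHom (dvd_mul_right n (m + 1)) (ZMod n) y = (e y).1 := fun y =>
    (RingHom.congr_fun hfst y).symm
  let u : (ZMod (m + 1))ˣ := ZMod.unitOfCoprime n h
  have hun : (u : ZMod (m + 1)) = (n : ZMod (m + 1)) := rfl
  set c : ZMod (m + 1) := ((u⁻¹ : (ZMod (m + 1))ˣ) : ZMod (m + 1)) * k with hc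
  have h2 : (e ((n : ZMod (n * (m + 1))))).2 = (n : ZMod (m + 1)) := by
    rw [← hsnd' (n : ZMod (n * (m + 1)))]; simp
  have E1 : {x : Fin (m + 1) → ZMod (n * (m + 1)) //
        (∀ i, ZMod.castHom (dvd_mul_left (m + 1) n) (ZMod (m + 1))
            ((n : ZMod (n * (m + 1))) * x i) = k) ∧
        ZMod.castHom (dvd_mul_right n (m + 1)) (ZMod n) (∑ i, x i) = l}
      ≃ {z : Fin (m + 1) → ZMod n // ∑ i, z i = l} :=
    { toFun := fun x => ⟨fun i => (e (x.1 i)).1, by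
        have := x.2.2
        rw [hfst', map_sum] at this
        simpa [Prod.fst_sum] using this⟩
      invFun := fun z => ⟨fun i => e.symm (z.1 i, c), by
        constructor
        · intro i
          rw [hsnd', map_mul, Prod.snd_mul, h2]
          simp only [RingEquiv.apply_symm_apply]
          rw [hc, ← hun, ← mul_assoc]
          simp
        · rw [hfst', map_sum]
          simp only [RingEquiv.apply_symm_apply, Prod.fst_sum]
          exact z.2⟩
      left_inv := fun x => by
        apply Subtype.ext
        funext i
        show e.symm ((e (x.1 i)).1, c) = x.1 i
        have hcond := x.2.1 i
        rw [hsnd', map_mul, Prod.snd_mul, h2] at hcond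
        have hxe2 : (e (x.1 i)).2 = c := by
          rw [hc]
          calc (e (x.1 i)).2 = ((u⁻¹ : (ZMod (m + 1))ˣ) : ZMod (m + 1)) *
                ((u : ZMod (m + 1)) * (e (x.1 i)).2) := by rw [← mul_assoc]; simp
            _ = ((u⁻¹ : (ZMod (m + 1))ˣ) : ZMod (m + 1)) * k := by rw [hun, hcond]
        have : (⟨(e (x.1 i)).1, c⟩ : ZMod n × ZMod (m + 1)) = e (x.1 i) := by
          rw [← hxe2]
        rw [this, RingEquiv.symm_apply_apply]
      right_inv := fun z => by
        apply Subtype.ext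
        funext i
        show (e (e.symm (z.1 i, c))).1 = z.1 i
        rw [RingEquiv.apply_symm_apply] }
  rw [Nat.card_congr E1]
  simpa using sum_fiber_card hn l
end

section
/- For n, r positive integers with gcd(n,r) = 1 and l, l' ∈ ℤ_n, the map (x₁,...,x_r) ↦ (x₁ + c, ..., x_r + c), where c ∈ ℤ_{nr} reduces mod n to r^{-1}(l' − l), gives a bijection between Ñ_{n,r}(0, l) and Ñ_{n,r}(0, l'). -/
/-- The translation bijection of Corollary 6.7: for `gcd(n,r) = 1` and `l, l' ∈ ℤ_n`,
the map `(x₁,...,x_r) ↦ (x₁ + c, ..., x_r + c)`, where `c ∈ ℤ_{nr}` reduces mod `n`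
to `r⁻¹(l' − l)` and satisfies `n·c ≡ 0 (mod r)`, is a bijection between
`Ñ_{n,r}(0,l)` and `Ñ_{n,r}(0,l')`. -/
theorem tildeN_translation_bijOn {n r : ℕ} (hn : 0 < n) (hr : 0 < r) (h : Nat.Coprime n r)
    (l l' : ZMod n) (c : ZMod (n * r))
    (hc1 : ZMod.castHom (dvd_mul_right n r) (ZMod n) c = (r : ZMod n)⁻¹ * (l' - l))
    (hc2 : ZMod.castHom (dvd_mul_left r n) (ZMod r) ((n : ZMod (n * r)) * c) = 0) :
    Set.BijOn (fun x : Fin r → ZMod (n * r) => fun i => x i + c)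
      {x | (∀ i, ZMod.castHom (dvd_mul_left r n) (ZMod r) ((n : ZMod (n * r)) * x i) = 0) ∧
        ZMod.castHom (dvd_mul_right n r) (ZMod n) (∑ i, x i) = l}
      {x | (∀ i, ZMod.castHom (dvd_mul_left r n) (ZMod r) ((n : ZMod (n * r)) * x i) = 0) ∧
        ZMod.castHom (dvd_mul_right n r) (ZMod n) (∑ i, x i) = l'} := by
  set φ := ZMod.castHom (dvd_mul_right n r) (ZMod n) with hφ
  set ψ := ZMod.castHom (dvd_mul_left r n) (ZMod r) with hψ
  have hru : (r : ZMod n) * (r : ZMod n)⁻¹ = 1 := ZMod.coe_mul_inv_eq_one r h.symm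
  have hφc : (r : ZMod n) * φ c = l' - l := by
    rw [hc1, ← mul_assoc, hru, one_mul]
  have hsum : ∀ x : Fin r → ZMod (n*r), φ (∑ i, (x i + c)) = φ (∑ i, x i) + (l' - l) := by
    intro x
    rw [Finset.sum_add_distrib, map_add, Finset.sum_const, Finset.card_univ,
      Fintype.card_fin, nsmul_eq_mul, map_mul, map_natCast, hφc]
  refine ⟨?_, ?_, ?_⟩
  · rintro x ⟨h1, h2⟩
    refine ⟨fun i => ?_, ?_⟩
    · simp only [mul_add, map_add, h1 i, hc2, add_zero]
    · rw [hsum, h2]; ring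
  · intro x hx y hy hxy
    funext i
    have := congrFun hxy i
    simpa using this
  · rintro y ⟨h1, h2⟩
    refine ⟨fun i => y i - c, ⟨fun i => ?_, ?_⟩, ?_⟩
    · rw [mul_sub, map_sub, h1 i, hc2, sub_zero]
    · have hs := hsum (fun i => y i - c)
      simp only [sub_add_cancel] at hs
      rw [h2] at hs
      linear_combination -hs
    · funext i; simp
end

section
/- Let n, r be positive integers and fix a primitive r-th root of unity ψ. Let L(a) = |N^π_{n,r}(ψ^a)| denote the number of unordered r-tuples of pairwise distinct n·r-th roots of unity (ε₁,...,ε_r) with ε_iⁿ = ψ^a for all i and ε₁···ε_r = 1, and let L'(a) denote the analogous count where exactly two of the ε_i coincide (partition {1^{r-2}, 2}). Then L'(a) = −r·L(a) + C(n, r−1), where C denotes the binomial coefficient. -/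
open scoped Classical

open Finset

/-- Structure of a multiset of size `r` with `r-1` distinct elements: it is its
dedup with one element repeated. -/
lemma multiset_struct {k : Type*} [DecidableEq k] (M : Multiset k) (r : ℕ)
    (h1 : Multiset.card M = r) (h2 : M.toFinset.card = r - 1) (hr : 0 < r) :
    ∃ x ∈ M.toFinset, M = x ::ₘ M.toFinset.val := by
  have hle : M.dedup ≤ M := Multiset.dedup_le M
  have hval : M.toFinset.val = M.dedup := rfl
  have hdc : Multiset.card M.dedup = r - 1 := by
    simpa [Multiset.toFinset, Finset.card] using h2
  have hcard1 : Multiset.card (M - M.dedup) = 1 := by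
    rw [Multiset.card_sub hle, h1, hdc]; omega
  obtain ⟨x, hx⟩ := Multiset.card_eq_one.1 hcard1
  have hM : M = x ::ₘ M.dedup := by
    have h := tsub_add_cancel_of_le hle
    conv_lhs => rw [← h]
    rw [hx, Multiset.singleton_add]
  refine ⟨x, ?_, by rwa [hval]⟩
  rw [Multiset.mem_toFinset]
  rw [hM]; exact Multiset.mem_cons_self _ _

/-- Equation (LLL) of Remark 6.2: with `L(a)` the number of sets of `r` pairwise
distinct `nr`-th roots of unity `ε` with `εⁿ = ψ^a` and product `1`, and `L'(a)` the
number of multisets of `r` such roots with exactly one repeated pair (pattern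
`{1^{r-2}, 2}`), one has `L'(a) = −r·L(a) + C(n, r−1)`. -/
theorem count_one_repeated_pair {k : Type*} [Field k] [IsAlgClosed k] [CharZero k]
    (n r : ℕ) (hn : 0 < n) (hr : 0 < r)
    (ψ : k) (hψ : IsPrimitiveRoot ψ r) (a : ℕ) :
    (Nat.card {M : Multiset k // Multiset.card M = r ∧ M.toFinset.card = r - 1 ∧
        (∀ ε ∈ M, ε ^ n = ψ ^ a) ∧ M.prod = 1} : ℤ)
      = -(r : ℤ) * Nat.card {S : Finset k // S.card = r ∧
          (∀ ε ∈ S, ε ^ n = ψ ^ a) ∧ ∏ ε ∈ S, ε = 1}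
        + Nat.choose n (r - 1) := by
  classical
  have hnz : NeZero n := ⟨hn.ne'⟩
  obtain ⟨ζ, hζ⟩ := HasEnoughRootsOfUnity.exists_primitiveRoot k n
  have hψa0 : (ψ : k) ^ a ≠ 0 := pow_ne_zero _ (hψ.ne_zero hr.ne')
  set A : Finset k := (Polynomial.nthRoots n (ψ ^ a)).toFinset with hAdef
  have hmemA : ∀ x : k, x ∈ A ↔ x ^ n = ψ ^ a := by
    intro x
    simp [hAdef, Polynomial.mem_nthRoots hn]
  have hcardA : A.card = n := by
    rw [hAdef, Multiset.toFinset_card_of_nodup (hζ.nthRoots_nodup hψa0),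
      hζ.card_nthRoots]
    exact if_pos (IsAlgClosed.exists_pow_nat_eq _ hn)
  have hA0 : ∀ x ∈ A, x ≠ 0 := by
    intro x hx h0
    exact hψa0 (by rw [← (hmemA x).1 hx, h0, zero_pow hn.ne'])
  have hprodne : ∀ T : Finset k, T ⊆ A → ∏ ε ∈ T, ε ≠ 0 := by
    intro T hT
    exact Finset.prod_ne_zero_iff.2 fun x hx => hA0 x (hT hx)
  have hprodval : ∀ T : Finset k, ∏ ε ∈ T, ε = T.val.prod := by
    intro T
    rw [Finset.prod_eq_multiset_prod, Multiset.map_id']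
  have hpow1 : (ψ ^ a) ^ r = 1 := by
    rw [← pow_mul, mul_comm, pow_mul, hψ.pow_eq_one, one_pow]
  have hinvA : ∀ T : Finset k, T ⊆ A → T.card = r - 1 → (∏ ε ∈ T, ε)⁻¹ ∈ A := by
    intro T hTA hTc
    rw [hmemA, inv_pow]
    have h1 : (∏ ε ∈ T, ε) ^ n = (ψ ^ a) ^ (r - 1) := by
      rw [← Finset.prod_pow]
      rw [Finset.prod_congr rfl fun x hx => (hmemA x).1 (hTA hx)]
      rw [Finset.prod_const, hTc]
    rw [h1]
    refine inv_eq_of_mul_eq_one_right ?_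
    rw [← pow_succ]
    have : r - 1 + 1 = r := by omega
    rw [this, hpow1]
  -- The three finsets
  set SL : Finset (Finset k) :=
    (A.powersetCard r).filter (fun S => ∏ ε ∈ S, ε = 1) with hSL
  set T1 : Finset (Finset k) :=
    (A.powersetCard (r - 1)).filter (fun T => (∏ ε ∈ T, ε)⁻¹ ∈ T) with hT1
  set T0 : Finset (Finset k) :=
    (A.powersetCard (r - 1)).filter (fun T => ¬ (∏ ε ∈ T, ε)⁻¹ ∈ T) with hT0
  -- L = SL.card
  have hLcard : Nat.card {S : Finset k // S.card = r ∧
      (∀ ε ∈ S, ε ^ n = ψ ^ a) ∧ ∏ ε ∈ S, ε = 1} = SL.card := by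
    rw [← Nat.card_eq_finsetCard]
    refine Nat.card_congr (Equiv.subtypeEquivRight fun S => ?_)
    rw [hSL, Finset.mem_filter, Finset.mem_powersetCard]
    constructor
    · rintro ⟨h1, h2, h3⟩
      exact ⟨⟨fun x hx => (hmemA x).2 (h2 x hx), h1⟩, h3⟩
    · rintro ⟨⟨h1, h2⟩, h3⟩
      exact ⟨h2, fun x hx => (hmemA x).1 (h1 hx), h3⟩
  -- L' = T1.card, via the equivalence M ↦ M.toFinset
  have hL'card : Nat.card {M : Multiset k // Multiset.card M = r ∧
      M.toFinset.card = r - 1 ∧ (∀ ε ∈ M, ε ^ n = ψ ^ a) ∧ M.prod = 1} = T1.card := by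
    rw [← Nat.card_eq_finsetCard]
    refine Nat.card_congr ?_
    refine
      { toFun := fun M => ⟨M.1.toFinset, ?_⟩
        invFun := fun T => ⟨(∏ ε ∈ T.1, ε)⁻¹ ::ₘ T.1.val, ?_⟩
        left_inv := ?_, right_inv := ?_ }
    · -- M.toFinset ∈ T1
      obtain ⟨M, h1, h2, h3, h4⟩ := M
      obtain ⟨x, hxT, hMeq⟩ := multiset_struct M r h1 h2 hr
      have hTA : M.toFinset ⊆ A := fun y hy =>
        (hmemA y).2 (h3 y (Multiset.mem_toFinset.1 hy))
      have hprod : x * ∏ ε ∈ M.toFinset, ε = 1 := by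
        rw [hprodval, ← Multiset.prod_cons, ← hMeq]; exact h4
      have hx : x = (∏ ε ∈ M.toFinset, ε)⁻¹ :=
        eq_inv_of_mul_eq_one_left hprod
      rw [hT1, Finset.mem_filter, Finset.mem_powersetCard]
      exact ⟨⟨hTA, h2⟩, hx ▸ hxT⟩
    · -- the cons multiset satisfies the predicates
      obtain ⟨T, hT⟩ := T
      rw [hT1, Finset.mem_filter, Finset.mem_powersetCard] at hT
      obtain ⟨⟨hTA, hTc⟩, hpT⟩ := hT
      have hne := hprodne T hTA
      have htf : ((∏ ε ∈ T, ε)⁻¹ ::ₘ T.val).toFinset = T := by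
        rw [Multiset.toFinset_cons, Finset.val_toFinset, Finset.insert_eq_self.2 hpT]
      refine ⟨?_, ?_, ?_, ?_⟩
      · show Multiset.card ((∏ ε ∈ T, ε)⁻¹ ::ₘ T.val) = r
        rw [Multiset.card_cons, ← Finset.card_def, hTc]; omega
      · show ((∏ ε ∈ T, ε)⁻¹ ::ₘ T.val).toFinset.card = r - 1
        rw [htf, hTc]
      · show ∀ ε ∈ (∏ ε ∈ T, ε)⁻¹ ::ₘ T.val, ε ^ n = ψ ^ a
        intro ε hε
        rcases Multiset.mem_cons.1 hε with h | h
        · subst h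
          exact (hmemA _).1 (hinvA T hTA hTc)
        · exact (hmemA _).1 (hTA h)
      · show ((∏ ε ∈ T, ε)⁻¹ ::ₘ T.val).prod = 1
        rw [Multiset.prod_cons, ← hprodval]
        exact inv_mul_cancel₀ hne
    · -- left inverse
      rintro ⟨M, h1, h2, h3, h4⟩
      obtain ⟨x, hxT, hMeq⟩ := multiset_struct M r h1 h2 hr
      have hprod : x * ∏ ε ∈ M.toFinset, ε = 1 := by
        rw [hprodval, ← Multiset.prod_cons, ← hMeq]; exact h4
      have hx : x = (∏ ε ∈ M.toFinset, ε)⁻¹ :=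
        eq_inv_of_mul_eq_one_left hprod
      apply Subtype.ext
      show (∏ ε ∈ M.toFinset, ε)⁻¹ ::ₘ M.toFinset.val = M
      rw [← hx, ← hMeq]
    · -- right inverse
      rintro ⟨T, hT⟩
      rw [hT1, Finset.mem_filter, Finset.mem_powersetCard] at hT
      obtain ⟨⟨hTA, hTc⟩, hpT⟩ := hT
      apply Subtype.ext
      show ((∏ ε ∈ T, ε)⁻¹ ::ₘ T.val).toFinset = T
      rw [Multiset.toFinset_cons, Finset.val_toFinset, Finset.insert_eq_self.2 hpT]
  -- T1.card + T0.card = choose n (r-1)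
  have hsplit : T1.card + T0.card = Nat.choose n (r - 1) := by
    rw [hT1, hT0, Finset.card_filter_add_card_filter_not,
      Finset.card_powersetCard, hcardA]
  -- T0.card = r * SL.card
  have hT0card : T0.card = r * SL.card := by
    have : T0.card = (SL.sigma fun S => S).card := by
      refine Finset.card_bij (fun T _ => ⟨insert (∏ ε ∈ T, ε)⁻¹ T, (∏ ε ∈ T, ε)⁻¹⟩)
        ?_ ?_ ?_
      · intro T hT
        rw [hT0, Finset.mem_filter, Finset.mem_powersetCard] at hT
        obtain ⟨⟨hTA, hTc⟩, hpT⟩ := hT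
        rw [Finset.mem_sigma]
        constructor
        · rw [hSL, Finset.mem_filter, Finset.mem_powersetCard]
          refine ⟨⟨Finset.insert_subset (hinvA T hTA hTc) hTA, ?_⟩, ?_⟩
          · rw [Finset.card_insert_of_notMem hpT, hTc]; omega
          · rw [Finset.prod_insert hpT]
            exact inv_mul_cancel₀ (hprodne T hTA)
        · exact Finset.mem_insert_self _ _
      · intro T₁ h₁ T₂ h₂ heq
        rw [hT0, Finset.mem_filter, Finset.mem_powersetCard] at h₁ h₂
        obtain ⟨heq1, heq2⟩ := Sigma.mk.inj_iff.1 heq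
        rw [heq_iff_eq] at heq2
        have := Finset.erase_insert h₁.2
        rw [← this, heq1, heq2, Finset.erase_insert h₂.2]
      · rintro ⟨S, y⟩ hb
        rw [Finset.mem_sigma] at hb
        obtain ⟨hS, hy⟩ := hb
        rw [hSL, Finset.mem_filter, Finset.mem_powersetCard] at hS
        obtain ⟨⟨hSA, hSc⟩, hSp⟩ := hS
        have hyA : y ∈ A := hSA hy
        have hy0 : y ≠ 0 := hA0 y hyA
        have hprodT : ∏ ε ∈ S.erase y, ε = y⁻¹ := by
          refine eq_inv_of_mul_eq_one_left ?_
          rw [Finset.prod_erase_mul S _ hy, hSp]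
        have hinv : (∏ ε ∈ S.erase y, ε)⁻¹ = y := by rw [hprodT, inv_inv]
        refine ⟨S.erase y, ?_, ?_⟩
        · rw [hT0, Finset.mem_filter, Finset.mem_powersetCard]
          refine ⟨⟨(Finset.erase_subset _ _).trans hSA, ?_⟩, ?_⟩
          · rw [Finset.card_erase_of_mem hy, hSc]
          · rw [hinv]; exact Finset.notMem_erase _ _
        · rw [Sigma.mk.inj_iff, hinv, Finset.insert_erase hy]
          exact ⟨rfl, HEq.rfl⟩
    rw [this, Finset.card_sigma]
    have hcongr : ∀ S ∈ SL, #S = r := by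
      intro S hS
      rw [hSL, Finset.mem_filter, Finset.mem_powersetCard] at hS
      exact hS.1.2
    calc ∑ S ∈ SL, #S = ∑ _S ∈ SL, r := Finset.sum_congr rfl hcongr
      _ = r * #SL := by rw [Finset.sum_const, smul_eq_mul, mul_comm]
  rw [hLcard, hL'card]
  have hnat : T1.card + r * SL.card = Nat.choose n (r - 1) := by
    rw [← hT0card]; exact hsplit
  have hz : ((T1.card : ℤ)) + (r : ℤ) * (SL.card : ℤ) = (Nat.choose n (r - 1) : ℤ) := by
    exact_mod_cast hnat
  linarith
end
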